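/- Let 0 < α < 1 and m ≥ 2, and define V(x) = ((1-α)/2)‖x‖² + (α/2)(x_1 + ⋯ + x_m)² on ℝ^m. For step size τ > 0, define the parallel proximal coordinate update x_j^{k+1} = argmin_{x_j ∈ ℝ} { V(x_j, x_{-j}^k) + (x_j - x_j^k)²/(2τ) }. Then the sum s^k = x_1^k + ⋯ + x_m^k satisfies s^k = ((τ^{-1} - (m-1)α)/(1 + τ^{-1}))^k · s^0 for all k ≥ 0. -/

import Mathlib

open Finset

lemma sum_update_aux {m : ℕ} (y : Fin m → ℝ) (j : Fin m) (t : ℝ) :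
    ∑ i, Function.update y j t i = t + (∑ i, y i - y j) := by
  rw [Finset.sum_update_of_mem (Finset.mem_univ j),
    Finset.sum_sdiff_eq_sub (Finset.subset_univ {j}), Finset.sum_singleton]

lemma sum_update_sq_aux {m : ℕ} (y : Fin m → ℝ) (j : Fin m) (t : ℝ) :
    ∑ i, (Function.update y j t i) ^ 2 = t ^ 2 + (∑ i, (y i) ^ 2 - (y j) ^ 2) := by
  have h : ∀ i, (Function.update y j t i) ^ 2
      = Function.update (fun i => (y i) ^ 2) j (t ^ 2) i := by
    intro i
    exact (Function.apply_update (fun _ s => s ^ 2) y j t i)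
  simp_rw [h]
  exact sum_update_aux _ j _

/-- for `V(x) = (1-α)/2 ‖x‖² + (α/2)(x₁+⋯+x_m)²` and the parallel proximal
coordinate update with step size `τ`, the coordinate sum satisfies
`s^k = ((τ⁻¹ - (m-1)α)/(1+τ⁻¹))^k s^0`. -/
theorem stmt2 {m : ℕ} (hm : 2 ≤ m) (α τ : ℝ) (hα0 : 0 < α) (hα1 : α < 1) (hτ : 0 < τ)
    (V : (Fin m → ℝ) → ℝ)
    (hV : ∀ y, V y = (1 - α) / 2 * ∑ j, (y j) ^ 2 + α / 2 * (∑ j, y j) ^ 2)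
    (x : ℕ → Fin m → ℝ)
    (hupd : ∀ k, ∀ j, ∀ t : ℝ,
      V (Function.update (x k) j (x (k + 1) j)) + (x (k + 1) j - x k j) ^ 2 / (2 * τ)
        ≤ V (Function.update (x k) j t) + (t - x k j) ^ 2 / (2 * τ)) :
    ∀ k : ℕ, (∑ j, x k j) = ((τ⁻¹ - ((m : ℝ) - 1) * α) / (1 + τ⁻¹)) ^ k * ∑ j, x 0 j := by
  set b : ℝ := τ⁻¹ with hb
  have hb0 : 0 < b := inv_pos.mpr hτ
  have hbτ : τ * b = 1 := mul_inv_cancel₀ (ne_of_gt hτ)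
  have hc : 0 < 1 + b := by linarith
  -- explicit update formula
  have hx : ∀ k j, x (k + 1) j
      = (x k j * (b + α) - α * ∑ i, x k i) / (1 + b) := by
    intro k j
    set S := ∑ i, x k i with hS
    set tstar : ℝ := (x k j * (b + α) - α * S) / (1 + b) with ht
    have key := hupd k j tstar
    rw [hV, hV, sum_update_aux, sum_update_aux, sum_update_sq_aux, sum_update_sq_aux] at key
    have hts : (1 + b) * tstar = x k j * (b + α) - α * S := by
      rw [ht]; field_simp
    -- quadratic: difference equals ((1+b)/2)(x' - tstar)^2 ≤ 0
    have hsq : (x (k + 1) j - tstar) ^ 2 ≤ 0 := by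
      have h2τ : (0:ℝ) < 2 * τ := by linarith
      rw [← sub_nonneg] at key
      have key2 := mul_nonneg key h2τ.le
      have hτ' : τ ≠ 0 := ne_of_gt hτ
      field_simp at key2
      have key3 := mul_nonneg key2 (by linarith : (0:ℝ) ≤ 2 * (2 * τ))
      replace key3 : 0 ≤ (((1 - α) * (tstar ^ 2 + (∑ i : Fin m, x k i ^ 2 - x k j ^ 2)) +
                α * (tstar + (∑ i : Fin m, x k i - x k j)) ^ 2) * (2 * τ) +
              (tstar - x k j) ^ 2 * 2 -
            (((1 - α) * (x (k + 1) j ^ 2 + (∑ i : Fin m, x k i ^ 2 - x k j ^ 2)) +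
                α * (x (k + 1) j + (∑ i : Fin m, x k i - x k j)) ^ 2) * (2 * τ) +
              (x (k + 1) j - x k j) ^ 2 * 2)) * (2 * τ) := by
        exact key3.trans_eq (by ring)
      have hts2 : (τ + 1) * tstar = x k j * (1 + τ * α) - τ * α * S := by
        linear_combination τ * hts - (tstar - x k j) * hbτ
      have hE : (((1 - α) * (tstar ^ 2 + (∑ i : Fin m, x k i ^ 2 - x k j ^ 2)) +
              α * (tstar + (∑ i : Fin m, x k i - x k j)) ^ 2) * (2 * τ) +
            (tstar - x k j) ^ 2 * 2 -
          (((1 - α) * (x (k + 1) j ^ 2 + (∑ i : Fin m, x k i ^ 2 - x k j ^ 2)) +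
              α * (x (k + 1) j + (∑ i : Fin m, x k i - x k j)) ^ 2) * (2 * τ) +
            (x (k + 1) j - x k j) ^ 2 * 2)) * (2 * τ)
          = -(4 * τ * (τ + 1)) * (x (k + 1) j - tstar) ^ 2
            + 8 * τ * (tstar - x (k + 1) j) * ((τ + 1) * tstar - (x k j * (1 + τ * α) - τ * α * S)) := by
        rw [hS]; ring
      rw [hE, hts2, sub_self, mul_zero, add_zero] at key3
      nlinarith [key3, mul_pos hτ (show (0:ℝ) < τ + 1 by linarith)]
    have : x (k + 1) j = tstar := by nlinarith [sq_nonneg (x (k+1) j - tstar)]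
    rw [this, ht]
  -- sum recursion
  have hsum : ∀ k, (∑ j, x (k + 1) j)
      = (b - ((m : ℝ) - 1) * α) / (1 + b) * ∑ j, x k j := by
    intro k
    calc ∑ j, x (k + 1) j = ∑ j, (x k j * (b + α) - α * ∑ i, x k i) / (1 + b) := by
          exact Finset.sum_congr rfl fun j _ => hx k j
      _ = ((∑ j, x k j) * (b + α) - (m : ℝ) * (α * ∑ i, x k i)) / (1 + b) := by
          rw [← Finset.sum_div, Finset.sum_sub_distrib, ← Finset.sum_mul, Finset.sum_const,
            Finset.card_univ, Fintype.card_fin, nsmul_eq_mul]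
      _ = (b - ((m : ℝ) - 1) * α) / (1 + b) * ∑ j, x k j := by
          field_simp; ring
  intro k
  induction k with
  | zero => simp
  | succ n ih => rw [hsum n, ih, pow_succ]; ring
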